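/- Let n ≥ 2, let 1 ≤ k ≤ m, and let C ⊆ X with |C| = k be a set of centers with cost(C) > (5/(1 − 1/n))·OPT_k. Then there exists a swap C' of C with cost(C') ≤ (1 − 1/n²)·cost(C). -/

import Mathlib

lemma sInf_image_finset {Y : Type*} [MetricSpace Y] [DecidableEq Y] (q : Y) (s : Finset Y) (h : s.Nonempty) :
    sInf ((fun c => dist q c) '' (s : Set Y)) = s.inf' h (fun c => dist q c) := by
  rw [← Finset.coe_image, Finset.Nonempty.csInf_eq_min' (h.image _), Finset.min'_eq_inf',
    Finset.inf'_image]
  rfl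

lemma exists_two_to_one_map {α β : Type*} [DecidableEq α] [DecidableEq β]
    (B : Finset α) (D : Finset β) (d0 : β) (h : B.card ≤ 2 * D.card) :
    ∃ ψ : α → β, (∀ b ∈ B, ψ b ∈ D) ∧ ∀ c, (B.filter (fun b => ψ b = c)).card ≤ 2 := by
  classical
  set eB : ↥B ≃ Fin B.card := Fintype.equivFinOfCardEq (Fintype.card_coe B) with heB
  set eD : ↥D ≃ Fin D.card := Fintype.equivFinOfCardEq (Fintype.card_coe D) with heD
  have hpf : ∀ (b : α) (hb : b ∈ B), (eB ⟨b, hb⟩ : ℕ) / 2 < D.card := by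
    intro b hb
    have h1 : (eB ⟨b, hb⟩ : ℕ) < B.card := (eB ⟨b, hb⟩).isLt
    have : (eB ⟨b, hb⟩ : ℕ) < D.card * 2 := by omega
    exact Nat.div_lt_iff_lt_mul (by norm_num) |>.mpr this
  refine ⟨fun b => if hb : b ∈ B then (eD.symm ⟨(eB ⟨b, hb⟩ : ℕ) / 2, hpf b hb⟩ : ↥D) else d0,
    ?_, ?_⟩
  · intro b hb; simp only [dif_pos hb]; exact Subtype.coe_prop _
  · intro c
    set f : α → Fin 2 := fun b => if hb : b ∈ B then ⟨(eB ⟨b, hb⟩ : ℕ) % 2, Nat.mod_lt _ (by norm_num)⟩ else 0 with hf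
    have : (B.filter (fun b => (if hb : b ∈ B then ((eD.symm ⟨(eB ⟨b, hb⟩ : ℕ) / 2, hpf b hb⟩ : ↥D) : β) else d0) = c)).card ≤ (Finset.univ : Finset (Fin 2)).card := by
      apply Finset.card_le_card_of_injOn f (fun _ _ => Finset.mem_univ _)
      intro b1 hb1 b2 hb2 hfeq
      simp only [Finset.coe_filter, Set.mem_setOf_eq] at hb1 hb2
      obtain ⟨hb1B, hb1c⟩ := hb1
      obtain ⟨hb2B, hb2c⟩ := hb2
      rw [dif_pos hb1B] at hb1c
      rw [dif_pos hb2B] at hb2c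
      have hdiv : (eB ⟨b1, hb1B⟩ : ℕ) / 2 = (eB ⟨b2, hb2B⟩ : ℕ) / 2 := by
        have := hb1c.trans hb2c.symm
        have h2 := eD.symm.injective (Subtype.coe_injective this)
        exact congrArg Fin.val h2
      have hmod : (eB ⟨b1, hb1B⟩ : ℕ) % 2 = (eB ⟨b2, hb2B⟩ : ℕ) % 2 := by
        simp only [hf, dif_pos hb1B, dif_pos hb2B] at hfeq
        exact congrArg Fin.val hfeq
      have : (eB ⟨b1, hb1B⟩ : ℕ) = (eB ⟨b2, hb2B⟩ : ℕ) := by omega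
      have := eB.injective (Fin.ext this)
      exact congrArg Subtype.val this
    simpa using this

/-- Improving swap for uncertain `k`-median clustering: if `n ≥ 2` and the center set
`C` has `cost(C) > (5/(1 − 1/n))·OPT_k`, then some single swap `C' = (C \ {a}) ∪ {b}`
with `a ∈ C`, `b ∈ X \ C` satisfies `cost(C') ≤ (1 − 1/n²)·cost(C)`. -/
theorem kmedian_improving_swap
    {Y : Type*} [MetricSpace Y] [DecidableEq Y]
    (X : Finset Y) (m : ℕ) (hm : X.card = m)
    (n : ℕ) (hn : 2 ≤ n) (p : Fin n → Y) (w : Fin n → ℝ) (hw : ∀ i, 0 ≤ w i)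
    (cost : Finset Y → ℝ)
    (hcost : ∀ C : Finset Y,
      cost C = ∑ i, w i * sInf ((fun c => dist (p i) c) '' (C : Set Y)))
    (k : ℕ) (hk1 : 1 ≤ k) (hkm : k ≤ m)
    (OPT : ℝ)
    (hOPT : IsLeast {v : ℝ | ∃ C' : Finset Y, C' ⊆ X ∧ C'.card = k ∧ cost C' = v} OPT)
    (C : Finset Y) (hC : C ⊆ X) (hCk : C.card = k)
    (hbad : (5 / (1 - 1 / (n : ℝ))) * OPT < cost C) :
    ∃ a ∈ C, ∃ b ∈ X \ C,
      cost (insert b (C.erase a)) ≤ (1 - 1 / (n : ℝ) ^ 2) * cost C := by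
  classical
  obtain ⟨hOPTmem, hOPTlb⟩ := hOPT
  obtain ⟨Cs, hCsX, hCsk, hCscost⟩ := hOPTmem
  have hnR : (2:ℝ) ≤ (n:ℝ) := by exact_mod_cast hn
  have hnpos : (0:ℝ) < (n:ℝ) := by linarith
  have h1n : (0:ℝ) < 1 - 1/(n:ℝ) := by
    rw [sub_pos, div_lt_one hnpos]; linarith
  have neC : C.Nonempty := Finset.card_pos.mp (by omega)
  have neCs : Cs.Nonempty := Finset.card_pos.mp (by omega)
  -- distances to C and Cs
  set dC : Fin n → ℝ := fun j => C.inf' neC (fun c => dist (p j) c) with hdC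
  set dS : Fin n → ℝ := fun j => Cs.inf' neCs (fun c => dist (p j) c) with hdS
  have hcostC : cost C = ∑ j, w j * dC j := by
    rw [hcost]
    exact Finset.sum_congr rfl fun j _ => by rw [sInf_image_finset (p j) C neC]
  have hcostCs : cost Cs = ∑ j, w j * dS j := by
    rw [hcost]
    exact Finset.sum_congr rfl fun j _ => by rw [sInf_image_finset (p j) Cs neCs]
  have hdCle : ∀ j, ∀ c ∈ C, dC j ≤ dist (p j) c := fun j c hc => Finset.inf'_le _ hc
  have hdSle : ∀ j, ∀ c ∈ Cs, dS j ≤ dist (p j) c := fun j c hc => Finset.inf'_le _ hc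
  have hdC0 : ∀ j, 0 ≤ dC j := fun j => Finset.le_inf' _ _ fun c _ => dist_nonneg
  have hdS0 : ∀ j, 0 ≤ dS j := fun j => Finset.le_inf' _ _ fun c _ => dist_nonneg
  have hOPT0 : 0 ≤ OPT := by
    rw [← hCscost, hcostCs]
    exact Finset.sum_nonneg fun j _ => mul_nonneg (hw j) (hdS0 j)
  have hcostC0 : 0 < cost C := by
    have : 0 ≤ 5 / (1 - 1/(n:ℝ)) * OPT :=
      mul_nonneg (div_nonneg (by norm_num) h1n.le) hOPT0
    linarith
  -- nearest-center selectors
  choose σ hσmem hσeq using fun j => C.exists_mem_eq_inf' (H := neC) (fun c => dist (p j) c)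
  choose σs hσsmem hσseq using fun j => Cs.exists_mem_eq_inf' (H := neCs) (fun c => dist (p j) c)
  choose η hηmem hηeq using fun y => C.exists_mem_eq_inf' (H := neC) (fun c => dist y c)
  have hηle : ∀ y, ∀ c ∈ C, dist y (η y) ≤ dist y c := by
    intro y c hc
    rw [← hηeq y]
    exact Finset.inf'_le _ hc
  -- the combinatorial pairing
  set B' : Finset Y := Cs \ C with hB'
  set B : Finset Y := B'.filter (fun b => ∃ cs ∈ Cs, cs ≠ b ∧ η cs = η b) with hBdef
  set D : Finset Y := C \ Cs.image η with hDdef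
  have hImC : Cs.image η ⊆ C := by
    intro c hc
    obtain ⟨y, _, rfl⟩ := Finset.mem_image.mp hc
    exact hηmem y
  have hdCeq : ∀ j, dC j = dist (p j) (σ j) := fun j => hσeq j
  have hdSeq : ∀ j, dS j = dist (p j) (σs j) := fun j => hσseq j
  have hBsubCs : B ⊆ Cs := (Finset.filter_subset _ _).trans Finset.sdiff_subset
  have hBD : B.card ≤ 2 * D.card := by
    have hCs_card : Cs.card = ∑ c ∈ Cs.image η, (Cs.filter (fun b => η b = c)).card :=
      Finset.card_eq_sum_card_fiberwise (fun b hb => Finset.mem_image_of_mem η hb)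
    have hB_card : B.card = ∑ c ∈ Cs.image η, (B.filter (fun b => η b = c)).card :=
      Finset.card_eq_sum_card_fiberwise (fun b hb => Finset.mem_image_of_mem η (hBsubCs hb))
    have hper : ∀ c ∈ Cs.image η,
        (B.filter (fun b => η b = c)).card + 2 ≤ 2 * (Cs.filter (fun b => η b = c)).card := by
      intro c hc
      obtain ⟨y0, hy0, hy0eq⟩ := Finset.mem_image.mp hc
      have hfib1 : 1 ≤ (Cs.filter (fun b => η b = c)).card :=
        Finset.card_pos.mpr ⟨y0, Finset.mem_filter.mpr ⟨hy0, hy0eq⟩⟩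
      rcases (B.filter (fun b => η b = c)).eq_empty_or_nonempty with he | ⟨b, hb⟩
      · rw [he]; simpa using hfib1
      · obtain ⟨hbB2, hbηc⟩ := Finset.mem_filter.mp hb
        obtain ⟨hbB', cs, hcs, hne, hηeq2⟩ := Finset.mem_filter.mp hbB2
        have hfib2 : 2 ≤ (Cs.filter (fun b => η b = c)).card := by
          apply Finset.one_lt_card.mpr
          exact ⟨cs, Finset.mem_filter.mpr ⟨hcs, hηeq2.trans hbηc⟩,
            b, Finset.mem_filter.mpr ⟨hBsubCs hbB2, hbηc⟩, hne⟩
        have hsub : (B.filter (fun b => η b = c)).card ≤ (Cs.filter (fun b => η b = c)).card :=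
          Finset.card_le_card (Finset.filter_subset_filter _ hBsubCs)
        omega
    have hsum2 : B.card + 2 * (Cs.image η).card ≤ 2 * Cs.card := by
      rw [hB_card, hCs_card, Finset.mul_sum]
      have : ∑ c ∈ Cs.image η, (B.filter (fun b => η b = c)).card + 2 * (Cs.image η).card
          = ∑ c ∈ Cs.image η, ((B.filter (fun b => η b = c)).card + 2) := by
        rw [Finset.sum_add_distrib, Finset.sum_const, smul_eq_mul, mul_comm]
      rw [this]
      exact Finset.sum_le_sum hper
    have hDcard : D.card = C.card - (Cs.image η).card := Finset.card_sdiff_of_subset hImC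
    have hIm_le : (Cs.image η).card ≤ C.card := Finset.card_le_card hImC
    omega
  obtain ⟨ψ, hψD, hψcard⟩ := exists_two_to_one_map B D neC.choose hBD
  set φ : Y → Y := fun b => if b ∈ B then ψ b else η b with hφ
  have hφC : ∀ b ∈ B', φ b ∈ C := by
    intro b hb
    by_cases hbB : b ∈ B
    · simp only [hφ, if_pos hbB]
      exact (Finset.mem_sdiff.mp (hψD b hbB)).1
    · simp only [hφ, if_neg hbB]
      exact hηmem b
  have hφcap : ∀ b ∈ B', ∀ cs ∈ Cs, cs ≠ b → η cs ≠ φ b := by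
    intro b hb cs hcs hne
    by_cases hbB : b ∈ B
    · simp only [hφ, if_pos hbB]
      intro hcontra
      have := hψD b hbB
      rw [hDdef, Finset.mem_sdiff] at this
      exact this.2 (Finset.mem_image.mpr ⟨cs, hcs, hcontra⟩)
    · simp only [hφ, if_neg hbB]
      intro hcontra
      exact hbB (Finset.mem_filter.mpr ⟨hb, ⟨cs, hcs, hne, hcontra⟩⟩)
  have hφfib : ∀ c, (B'.filter (fun b => φ b = c)).card ≤ 2 := by
    intro c
    by_cases hcase : ∃ b0 ∈ B'.filter (fun b => φ b = c), b0 ∈ B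
    · obtain ⟨b0, hb0f, hb0B⟩ := hcase
      have hcD : c ∈ D := by
        have h1 := hψD b0 hb0B
        have h2 := (Finset.mem_filter.mp hb0f).2
        simp only [hφ, if_pos hb0B] at h2
        rwa [← h2]
      have hsub : B'.filter (fun b => φ b = c) ⊆ B.filter (fun b => ψ b = c) := by
        intro b hbm
        obtain ⟨hbB', hbc⟩ := Finset.mem_filter.mp hbm
        have hbB : b ∈ B := by
          by_contra hbn
          simp only [hφ, if_neg hbn] at hbc
          have himg : c ∈ Cs.image η :=
            Finset.mem_image.mpr ⟨b, (Finset.mem_sdiff.mp hbB').1, hbc⟩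
          rw [hDdef, Finset.mem_sdiff] at hcD
          exact hcD.2 himg
        refine Finset.mem_filter.mpr ⟨hbB, ?_⟩
        simpa [hφ, if_pos hbB] using hbc
      exact le_trans (Finset.card_le_card hsub) (hψcard c)
    · push_neg at hcase
      have hone : (B'.filter (fun b => φ b = c)).card ≤ 1 := by
        apply Finset.card_le_one.mpr
        intro b1 hb1 b2 hb2
        by_contra hne
        have hb1n := hcase b1 hb1
        have hb2n := hcase b2 hb2
        obtain ⟨hb1B', hb1c⟩ := Finset.mem_filter.mp hb1
        obtain ⟨hb2B', hb2c⟩ := Finset.mem_filter.mp hb2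
        simp only [hφ, if_neg hb1n] at hb1c
        simp only [hφ, if_neg hb2n] at hb2c
        exact hb1n (Finset.mem_filter.mpr ⟨hb1B',
          ⟨b2, (Finset.mem_sdiff.mp hb2B').1, Ne.symm hne, hb2c.trans hb1c.symm⟩⟩)
      omega
  -- the change quantity
  set Δ : Fin n → Y → ℝ := fun j b =>
    (if σs j = b then dS j - dC j else 0) +
    (if σs j ≠ b ∧ σ j = φ b then 2 * dS j else 0) with hΔ
  set stuff : Y → ℝ := fun b => ∑ j, w j * Δ j b with hstuff
  -- swap inequality
  have hswap : ∀ b ∈ B', cost (insert b (C.erase (φ b))) ≤ cost C + stuff b := by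
    intro b hb
    have haC : φ b ∈ C := hφC b hb
    have neC' : (insert b (C.erase (φ b))).Nonempty := Finset.insert_nonempty _ _
    rw [hcost (insert b (C.erase (φ b))), hcostC]
    simp only [hstuff]
    rw [← Finset.sum_add_distrib]
    apply Finset.sum_le_sum
    intro j _
    rw [sInf_image_finset (p j) _ neC', ← mul_add]
    apply mul_le_mul_of_nonneg_left _ (hw j)
    by_cases h1 : σs j = b
    · have hle : (insert b (C.erase (φ b))).inf' neC' (fun c => dist (p j) c) ≤ dist (p j) b :=
        Finset.inf'_le _ (Finset.mem_insert_self b _)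
      have heq : dS j = dist (p j) b := by rw [hdSeq j, h1]
      have hΔval : Δ j b = dS j - dC j := by
        simp only [hΔ]
        rw [if_pos h1, if_neg (fun hc => hc.1 h1), add_zero]
      rw [hΔval]; linarith
    · by_cases h2 : σ j = φ b
      · have hmem : η (σs j) ∈ insert b (C.erase (φ b)) := by
          apply Finset.mem_insert_of_mem
          exact Finset.mem_erase.mpr ⟨hφcap b hb (σs j) (hσsmem j) h1, hηmem _⟩
        have hle := Finset.inf'_le (fun c => dist (p j) c) hmem
        have htri : dist (p j) (η (σs j)) ≤ dS j + (dS j + dC j) := by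
          calc dist (p j) (η (σs j))
              ≤ dist (p j) (σs j) + dist (σs j) (η (σs j)) := dist_triangle _ _ _
            _ ≤ dist (p j) (σs j) + dist (σs j) (σ j) :=
                add_le_add_right (hηle (σs j) (σ j) (hσmem j)) _
            _ ≤ dist (p j) (σs j) + (dist (σs j) (p j) + dist (p j) (σ j)) :=
                add_le_add_right (dist_triangle _ _ _) _
            _ = dS j + (dS j + dC j) := by
                rw [dist_comm (σs j) (p j), ← hdSeq j, ← hdCeq j]
        have hΔval : Δ j b = 2 * dS j := by
          simp only [hΔ]
          rw [if_neg h1, if_pos ⟨h1, h2⟩, zero_add]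
        rw [hΔval]; linarith
      · have hmem : σ j ∈ insert b (C.erase (φ b)) :=
          Finset.mem_insert_of_mem (Finset.mem_erase.mpr ⟨h2, hσmem j⟩)
        have hle := Finset.inf'_le (fun c => dist (p j) c) hmem
        have heq : dist (p j) (σ j) = dC j := (hdCeq j).symm
        have hΔval : Δ j b = 0 := by
          simp only [hΔ]
          rw [if_neg h1, if_neg (fun hc => h2 hc.2), add_zero]
        rw [hΔval]; linarith
  -- total bound
  have hsum : ∑ b ∈ B', stuff b ≤ 5 * OPT - cost C := by
    have hswapsum : ∑ b ∈ B', stuff b = ∑ j, w j * (∑ b ∈ B', Δ j b) := by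
      simp only [hstuff]
      rw [Finset.sum_comm]
      exact Finset.sum_congr rfl fun j _ => (Finset.mul_sum _ _ _).symm
    have hinner : ∀ j, ∑ b ∈ B', Δ j b ≤ (dS j - dC j) + 4 * dS j := by
      intro j
      simp only [hΔ]
      rw [Finset.sum_add_distrib]
      have hp1 : ∑ b ∈ B', (if σs j = b then dS j - dC j else 0) ≤ dS j - dC j := by
        rw [Finset.sum_ite_eq]
        by_cases hmem : σs j ∈ B'
        · rw [if_pos hmem]
        · rw [if_neg hmem]
          have hsC : σs j ∈ C := by
            by_contra hcon
            exact hmem (Finset.mem_sdiff.mpr ⟨hσsmem j, hcon⟩)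
          have h2 : dC j ≤ dS j := by rw [hdSeq j]; exact hdCle j _ hsC
          linarith
      have hp2 : ∑ b ∈ B', (if σs j ≠ b ∧ σ j = φ b then 2 * dS j else 0) ≤ 4 * dS j := by
        have step1 : ∀ b ∈ B', (if σs j ≠ b ∧ σ j = φ b then 2 * dS j else 0)
            ≤ (if φ b = σ j then 2 * dS j else 0) := by
          intro b _
          by_cases hcond : σs j ≠ b ∧ σ j = φ b
          · rw [if_pos hcond, if_pos hcond.2.symm]
          · rw [if_neg hcond]
            split_ifs
            · linarith [hdS0 j]
            · exact le_refl _
        calc ∑ b ∈ B', (if σs j ≠ b ∧ σ j = φ b then 2 * dS j else 0)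
            ≤ ∑ b ∈ B', (if φ b = σ j then 2 * dS j else 0) := Finset.sum_le_sum step1
          _ = (B'.filter (fun b => φ b = σ j)).card • (2 * dS j) := by
              rw [Finset.sum_ite, Finset.sum_const, Finset.sum_const_zero, add_zero]
          _ = ((B'.filter (fun b => φ b = σ j)).card : ℝ) * (2 * dS j) := nsmul_eq_mul _ _
          _ ≤ 2 * (2 * dS j) := by
              apply mul_le_mul_of_nonneg_right _ (by linarith [hdS0 j])
              exact_mod_cast hφfib (σ j)
          _ = 4 * dS j := by ring
      linarith
    calc ∑ b ∈ B', stuff b = ∑ j, w j * (∑ b ∈ B', Δ j b) := hswapsum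
      _ ≤ ∑ j, w j * ((dS j - dC j) + 4 * dS j) :=
          Finset.sum_le_sum fun j _ => mul_le_mul_of_nonneg_left (hinner j) (hw j)
      _ = (∑ j, w j * dS j - ∑ j, w j * dC j) + 4 * ∑ j, w j * dS j := by
          rw [Finset.sum_congr rfl (fun j _ => show w j * ((dS j - dC j) + 4 * dS j)
            = (w j * dS j - w j * dC j) + 4 * (w j * dS j) by ring),
            Finset.sum_add_distrib, Finset.sum_sub_distrib, ← Finset.mul_sum]
      _ = 5 * OPT - cost C := by rw [← hcostCs, ← hcostC, hCscost]; ring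
  -- key numeric bound
  have hkey : 5 * OPT - cost C < -(cost C / (n:ℝ)) := by
    have h5 : 5 * OPT < cost C * (1 - 1/(n:ℝ)) := by
      rw [div_mul_eq_mul_div] at hbad
      exact (div_lt_iff₀ h1n).mp hbad
    have h6 : cost C * (1 - 1/(n:ℝ)) = cost C - cost C / n := by ring
    linarith
  -- the high-cost clusters
  set S : Finset Y := B'.filter (fun b => ∃ j, σs j = b) with hSdef
  have hSsub : S ⊆ B' := Finset.filter_subset _ _
  have hSstuff : ∑ b ∈ S, stuff b ≤ 5 * OPT - cost C := by
    refine le_trans (Finset.sum_le_sum_of_subset_of_nonneg hSsub ?_) hsum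
    intro b hbB' hbnS
    have hno : ∀ j, σs j ≠ b := by
      intro j hj
      exact hbnS (Finset.mem_filter.mpr ⟨hbB', j, hj⟩)
    apply Finset.sum_nonneg
    intro j _
    apply mul_nonneg (hw j)
    simp only [hΔ]
    rw [if_neg (hno j), zero_add]
    split_ifs
    · linarith [hdS0 j]
    · exact le_refl _
  have hScard : S.card ≤ n := by
    have hsub : S ⊆ Finset.image σs Finset.univ := by
      intro b hbS
      obtain ⟨hbm, j, hj⟩ := Finset.mem_filter.mp hbS
      exact Finset.mem_image.mpr ⟨j, Finset.mem_univ j, hj⟩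
    calc S.card ≤ (Finset.image σs Finset.univ).card := Finset.card_le_card hsub
      _ ≤ (Finset.univ : Finset (Fin n)).card := Finset.card_image_le
      _ = n := by simp
  have hSne : S.Nonempty := by
    rw [Finset.nonempty_iff_ne_empty]
    intro hemp
    rw [hemp, Finset.sum_empty] at hSstuff
    have : 0 < cost C / (n:ℝ) := div_pos hcostC0 hnpos
    linarith
  obtain ⟨b0, hb0S, hb0⟩ : ∃ b0 ∈ S, stuff b0 ≤ (5 * OPT - cost C) / S.card := by
    apply Finset.exists_le_of_sum_le hSne
    rw [Finset.sum_const, nsmul_eq_mul]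
    rw [mul_div_cancel₀]
    · exact hSstuff
    · exact_mod_cast hSne.card_pos.ne'
  have hb0B' : b0 ∈ B' := hSsub hb0S
  refine ⟨φ b0, hφC b0 hb0B', b0, ?_, ?_⟩
  · rw [Finset.mem_sdiff]
    rw [hB', Finset.mem_sdiff] at hb0B'
    exact ⟨hCsX hb0B'.1, hb0B'.2⟩
  · have h1 := hswap b0 hb0B'
    have h2 : (5 * OPT - cost C) / S.card ≤ -(cost C / (n:ℝ)^2) := by
      have hs1 : (1:ℝ) ≤ (S.card:ℝ) := by exact_mod_cast hSne.card_pos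
      have hsn : ((S.card:ℕ):ℝ) ≤ (n:ℝ) := by exact_mod_cast hScard
      rw [div_le_iff₀ (by linarith : (0:ℝ) < (S.card:ℝ))]
      have hneg : -(cost C/(n:ℝ)^2) ≤ 0 := by
        have : 0 ≤ cost C/(n:ℝ)^2 := div_nonneg hcostC0.le (by positivity)
        linarith
      have hmul : -(cost C/(n:ℝ)^2) * (n:ℝ) ≤ -(cost C/(n:ℝ)^2) * (S.card:ℝ) :=
        mul_le_mul_of_nonpos_left hsn hneg
      have hstep : -(cost C/(n:ℝ)^2) * (n:ℝ) = -(cost C / (n:ℝ)) := by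
        field_simp
      linarith
    calc cost (insert b0 (C.erase (φ b0))) ≤ cost C + stuff b0 := h1
      _ ≤ cost C + (5 * OPT - cost C) / S.card := by linarith
      _ ≤ cost C - cost C / (n:ℝ)^2 := by linarith
      _ = (1 - 1/(n:ℝ)^2) * cost C := by ring
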